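/- (Removing the integer bit from the 2-state UPG.) Work with probability vectors on 2 states {0,1}; let h = ½·δ_0 + ½·δ_1. For bits r_0, r_1, …, r_n ∈ {0,1} define Z_n(r_0; r_n, …, r_1) recursively by Z_0(r_0) = δ_{1−r_0} and, for n ≥ 1 with b_n = max(r_0, r_n), Z_n(r_0; r_n, …, r_1) = ( Z_{n−1}(r_0; r_{n−1}, …, r_1) ∗ (δ_{1−b_n} ⊕ h) ) ⊕ ( δ_{1−b_n} ∗ h ). Define Z′_n(r_n, …, r_1) by Z′_0 = δ_1 and, for n ≥ 1, Z′_n(r_n, …, r_1) = ( Z′_{n−1}(r_{n−1}, …, r_1) ∗ (δ_{1−r_n} ⊕ h) ) ⊕ ( δ_{1−r_n} ∗ h ). Then for all n ≥ 0 and all bits r_0, r_1, …, r_n, Z_n(r_0; r_n, …, r_1) = δ_{1−r_0} ∗ Z′_n(r_n, …, r_1); in particular, Z′_n(r_n, …, r_1) assigns probability (∑_{i=1}^{n} r_i·2^{i−1}) / 2^n to state 0. -/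

import Mathlib

noncomputable section

/-- Series composition: distribution of `min` of two independent states. -/
def smin {N : ℕ} (p q : Fin N → ℝ) : Fin N → ℝ :=
  fun k => ∑ i, ∑ j, if min i j = k then p i * q j else 0

/-- Parallel composition: distribution of `max` of two independent states. -/
def smax {N : ℕ} (p q : Fin N → ℝ) : Fin N → ℝ :=
  fun k => ∑ i, ∑ j, if max i j = k then p i * q j else 0

/-- The point mass at state `s`. -/
def delta {N : ℕ} (s : Fin N) : Fin N → ℝ := fun i => if i = s then 1 else 0

/-- The fair 2-state pswitch `h = ½·δ₀ + ½·δ₁`. -/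
def hB : Fin 2 → ℝ := fun i => (1 / 2) * delta (0 : Fin 2) i + (1 / 2) * delta (1 : Fin 2) i

/-- The reduced 2-state UPG `Z_n(r₀; r_n, …, r₁)`:
`Z₀(r₀) = δ_{1-r₀}`; for `n ≥ 1`, with `b_n = max(r₀, r_n)`,
`Z_n = (Z_{n-1} ∗ (δ_{1-b_n} ⊕ h)) ⊕ (δ_{1-b_n} ∗ h)`. -/
def Z (r : ℕ → Fin 2) : ℕ → (Fin 2 → ℝ)
  | 0 => delta (1 - r 0)
  | n + 1 =>
    smax (smin (Z r n) (smax (delta (1 - max (r 0) (r (n + 1)))) hB))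
      (smin (delta (1 - max (r 0) (r (n + 1)))) hB)

/-- The 2-state UPG with the integer bit removed, `Z′_n(r_n, …, r₁)`:
`Z′₀ = δ₁`; for `n ≥ 1`,
`Z′_n = (Z′_{n-1} ∗ (δ_{1-r_n} ⊕ h)) ⊕ (δ_{1-r_n} ∗ h)`. -/
def Z' (r : ℕ → Fin 2) : ℕ → (Fin 2 → ℝ)
  | 0 => delta (1 : Fin 2)
  | n + 1 =>
    smax (smin (Z' r n) (smax (delta (1 - r (n + 1))) hB))
      (smin (delta (1 - r (n + 1))) hB)


lemma Z'_sum (r : ℕ → Fin 2) (n : ℕ) : Z' r n 0 + Z' r n 1 = 1 := by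
  induction n with
  | zero => norm_num [Z', delta]
  | succ n ih =>
    have h : r (n+1) = 0 ∨ r (n+1) = 1 := by omega
    rcases h with h | h <;>
      · simp [Z', h, smin, smax, hB, delta, Fin.sum_univ_two]
        linarith

lemma Z'_val (r : ℕ → Fin 2) (n : ℕ) :
    Z' r n 0 = (∑ i ∈ Finset.Icc 1 n, ((r i : ℕ) : ℝ) * 2 ^ (i - 1)) / 2 ^ n := by
  induction n with
  | zero => norm_num [Z', delta]
  | succ n ih =>
    have hsum := Z'_sum r n
    have hIcc : (∑ i ∈ Finset.Icc 1 (n+1), ((r i : ℕ) : ℝ) * 2 ^ (i - 1))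
        = (∑ i ∈ Finset.Icc 1 n, ((r i : ℕ) : ℝ) * 2 ^ (i - 1)) + ((r (n+1) : ℕ) : ℝ) * 2 ^ n := by
      rw [Finset.sum_Icc_succ_top (by omega)]
      norm_num
    have h : r (n+1) = 0 ∨ r (n+1) = 1 := by omega
    have h1 : Z' r n 1 = 1 - (∑ i ∈ Finset.Icc 1 n, ((r i : ℕ) : ℝ) * 2 ^ (i - 1)) / 2 ^ n := by
      rw [← ih]; linarith
    rcases h with h | h <;>
      · simp [Z', h, smin, smax, hB, delta, Fin.sum_univ_two, hIcc, h1, ih]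
        field_simp
        ring_nf

lemma Z_eq (r : ℕ → Fin 2) (n : ℕ) : Z r n = smin (delta (1 - r 0)) (Z' r n) := by
  induction n with
  | zero =>
    have h0 : r 0 = 0 ∨ r 0 = 1 := by omega
    funext k
    fin_cases k <;> rcases h0 with h | h <;>
      simp [Z, Z', smin, delta, h, Fin.sum_univ_two]
  | succ n ih =>
    have h0 : r 0 = 0 ∨ r 0 = 1 := by omega
    have h1 : r (n+1) = 0 ∨ r (n+1) = 1 := by omega
    have hs := Z'_sum r n
    funext k
    rcases h0 with h0 | h0 <;> rcases h1 with h1 | h1 <;> fin_cases k <;>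
      · simp [Z, Z', smin, smax, hB, delta, h0, h1, ih, Fin.sum_univ_two]
        try linarith [hs]

/-- Removing the integer bit from the 2-state UPG: `Z_n = δ_{1-r₀} ∗ Z′_n` for
all bits; in particular `Z′_n` assigns probability `(∑_{i=1}^n r_i·2^{i-1})/2ⁿ`
to state `0`. -/
theorem upg2_remove_bit (n : ℕ) (r : ℕ → Fin 2) :
    Z r n = smin (delta (1 - r 0)) (Z' r n) ∧
    Z' r n 0 = (∑ i ∈ Finset.Icc 1 n, ((r i : ℕ) : ℝ) * 2 ^ (i - 1)) / 2 ^ n := by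
  exact ⟨Z_eq r n, Z'_val r n⟩
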